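/- Let Q be an inverse quantal frame and X a Q-sheaf. Then any set 𝒮 of Hilbert sections of X which is downwards closed in X (if x ≤ s and s ∈ 𝒮 then x ∈ 𝒮) and satisfies ⋁𝒮 = 1_X is a Hilbert basis of X. -/

import Mathlib

/-- A unital involutive quantale: a complete lattice with an associative
multiplication preserving arbitrary joins in each variable, a unit `e`, and a
join-preserving involution. -/
structure InvQuantale (Q : Type*) [CompleteLattice Q] where
  mul : Q → Q → Q
  e : Q
  star : Q → Q
  mul_assoc : ∀ a b c, mul (mul a b) c = mul a (mul b c)
  sSup_mul : ∀ (S : Set Q) (b : Q), mul (sSup S) b = ⨆ a ∈ S, mul a b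
  mul_sSup : ∀ (a : Q) (S : Set Q), mul a (sSup S) = ⨆ b ∈ S, mul a b
  e_mul : ∀ a, mul e a = a
  mul_e : ∀ a, mul a e = a
  star_star : ∀ a, star (star a) = a
  star_mul : ∀ a b, star (mul a b) = mul (star b) (star a)
  star_sSup : ∀ S : Set Q, star (sSup S) = ⨆ a ∈ S, star a

/-- The set of partial units of a quantale. -/
def InvQuantale.PU {Q : Type*} [CompleteLattice Q] (Qs : InvQuantale Q) : Set Q :=
  {s | Qs.mul s (Qs.star s) ≤ Qs.e ∧ Qs.mul (Qs.star s) s ≤ Qs.e}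

/-- An inverse quantal frame: a unital involutive quantale which is a frame,
has a stable support, and whose partial units join to the top. -/
structure InverseQuantalFrame (Q : Type*) [Order.Frame Q] extends toQuantale : InvQuantale Q where
  supp : Q → Q
  supp_le_e : ∀ a, supp a ≤ e
  supp_sSup : ∀ S : Set Q, supp (sSup S) = ⨆ a ∈ S, supp a
  supp_le_mul_star : ∀ a, supp a ≤ mul a (star a)
  le_supp_mul : ∀ a, a ≤ mul (supp a) a
  supp_stable : ∀ b a, b ≤ e → supp (mul b a) = mul b (supp a)
  sSup_PU : sSup {s | mul s (star s) ≤ e ∧ mul (star s) s ≤ e} = ⊤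

/-- A left module over a quantale: a complete lattice with a unital associative
action preserving arbitrary joins in each variable. -/
structure QuantaleModule {Q : Type*} [CompleteLattice Q] (Qs : InvQuantale Q)
    (X : Type*) [CompleteLattice X] where
  act : Q → X → X
  act_mul : ∀ a b x, act (Qs.mul a b) x = act a (act b x)
  act_e : ∀ x, act Qs.e x = x
  sSup_act : ∀ (S : Set Q) (x : X), act (sSup S) x = ⨆ a ∈ S, act a x
  act_sSup : ∀ (a : Q) (S : Set X), act a (sSup S) = ⨆ x ∈ S, act a x

/-- A pre-Hilbert module over a quantale. -/
structure PreHilbertModule {Q : Type*} [CompleteLattice Q] (Qs : InvQuantale Q)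
    (X : Type*) [CompleteLattice X] extends QuantaleModule Qs X where
  inner : X → X → Q
  inner_act : ∀ a x y, inner (act a x) y = Qs.mul a (inner x y)
  sSup_inner : ∀ (S : Set X) (y : X), inner (sSup S) y = ⨆ x ∈ S, inner x y
  inner_star : ∀ x y, inner x y = Qs.star (inner y x)

namespace PreHilbertModule

variable {Q X : Type*} [CompleteLattice Q] [CompleteLattice X] {Qs : InvQuantale Q}

/-- A Hilbert section: `⟨x,s⟩s ≤ x` for all `x`. -/
def IsHilbertSection (H : PreHilbertModule Qs X) (s : X) : Prop :=
  ∀ x, H.act (H.inner x s) s ≤ x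

/-- A regular element: `⟨s,s⟩s = s`. -/
def IsRegularSection (H : PreHilbertModule Qs X) (s : X) : Prop :=
  H.act (H.inner s s) s = s

/-- A Hilbert basis: `x = ⋁_{t ∈ S} ⟨x,t⟩t` for all `x`. -/
def IsHilbertBasis (H : PreHilbertModule Qs X) (S : Set X) : Prop :=
  ∀ x, x = ⨆ t ∈ S, H.act (H.inner x t) t

/-- Non-degeneracy of the inner product. -/
def Nondegenerate (H : PreHilbertModule Qs X) : Prop :=
  ∀ x y, (∀ z, H.inner x z = H.inner y z) → x = y

end PreHilbertModule

/-- A `Q`-locale over an inverse quantal frame: a module which is a frame and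
satisfies the anchor condition. -/
structure QLocale {Q : Type*} [Order.Frame Q] (Qf : InverseQuantalFrame Q)
    (X : Type*) [Order.Frame X] extends QuantaleModule Qf.toQuantale X where
  anchor : ∀ b x, b ≤ Qf.e → act b x = act b ⊤ ⊓ x

/-- A `Q`-sheaf over an inverse quantal frame: a pre-Hilbert module which is a
frame, satisfies the anchor condition, and has a Hilbert basis. -/
structure QSheaf {Q : Type*} [Order.Frame Q] (Qf : InverseQuantalFrame Q)
    (X : Type*) [Order.Frame X] extends PreHilbertModule Qf.toQuantale X where
  anchor : ∀ b x, b ≤ Qf.e → act b x = act b ⊤ ⊓ x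
  hasBasis : ∃ S : Set X, ∀ x, x = ⨆ t ∈ S, act (inner x t) t

namespace QSheaf

variable {Q X : Type*} [Order.Frame Q] [Order.Frame X] {Qf : InverseQuantalFrame Q}

/-- The support `ς_X(x) = ⟨x,x⟩ ∧ e` of a `Q`-sheaf. -/
def sppX (H : QSheaf Qf X) (x : X) : Q := H.inner x x ⊓ Qf.e

/-- A local section: `ς_X(x)s = x` for all `x ≤ s`. -/
def IsLocalSection (H : QSheaf Qf X) (s : X) : Prop :=
  ∀ x ≤ s, H.act (H.sppX x) s = x

/-- A principal section: a local section with `⟨s,s⟩ ≤ e`. -/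
def IsPrincipalSection (H : QSheaf Qf X) (s : X) : Prop :=
  H.IsLocalSection s ∧ H.inner s s ≤ Qf.e

/-- A right local section: `x = s ∧ 1_Q·x` for all `x ≤ s`. -/
def IsRightLocalSection (H : QSheaf Qf X) (s : X) : Prop :=
  ∀ x ≤ s, x = s ⊓ H.act ⊤ x

/-- A local bisection: simultaneously a local section and a right local section. -/
def IsBisection (H : QSheaf Qf X) (s : X) : Prop :=
  H.IsLocalSection s ∧ H.IsRightLocalSection s

end QSheaf


private lemma mono_of_sSup {α β : Type*} [CompleteLattice α] [CompleteLattice β]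
    (f : α → β) (hf : ∀ S : Set α, f (sSup S) = ⨆ a ∈ S, f a)
    {a b : α} (h : a ≤ b) : f a ≤ f b := by
  have h1 : f (sSup {a, b}) = ⨆ x ∈ ({a, b} : Set α), f x := hf _
  rw [sSup_pair, sup_eq_right.mpr h] at h1
  rw [h1]
  exact le_iSup₂ (f := fun x _ => f x) a (by simp)

/-- Key lemma: in a Q-sheaf, `x ≤ ⟨x,x⟩x` for all `x`. -/
private lemma le_act_inner_self {Q X : Type*} [Order.Frame Q] [Order.Frame X]
    {Qf : InverseQuantalFrame Q} (H : QSheaf Qf X) (x : X) :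
    x ≤ H.act (H.inner x x) x := by
  obtain ⟨T, hT⟩ := H.hasBasis
  have act_mono_l : ∀ {a b : Q} (y : X), a ≤ b → H.act a y ≤ H.act b y :=
    fun {a b} y h => mono_of_sSup (fun c => H.act c y) (fun S => H.sSup_act S y) h
  have act_mono_r : ∀ (a : Q) {y z : X}, y ≤ z → H.act a y ≤ H.act a z :=
    fun a {y z} h => mono_of_sSup (fun w => H.act a w) (fun S => H.act_sSup a S) h
  have inner_mono_l : ∀ {y z : X} (w : X), y ≤ z → H.inner y w ≤ H.inner z w :=
    fun {y z} w h => mono_of_sSup (fun v => H.inner v w) (fun S => H.sSup_inner S w) h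
  conv_lhs => rw [hT x]
  apply iSup₂_le
  intro u hu
  set a := H.inner x u with ha
  have haux : H.act a u ≤ x := by
    conv_rhs => rw [hT x]
    exact le_iSup₂ (f := fun t _ => H.act (H.inner x t) t) u hu
  have hsupp : Qf.supp a ≤ H.inner x x := by
    refine le_trans (Qf.supp_le_mul_star a) ?_
    have : Qf.toQuantale.mul a (Qf.toQuantale.star a) = H.inner (H.act a u) x := by
      rw [H.inner_act, ← H.inner_star]
    rw [this]
    exact inner_mono_l x haux
  calc H.act a u ≤ H.act (Qf.toQuantale.mul (Qf.supp a) a) u :=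
        act_mono_l u (Qf.le_supp_mul a)
    _ = H.act (Qf.supp a) (H.act a u) := by rw [H.act_mul]
    _ ≤ H.act (Qf.supp a) x := act_mono_r _ haux
    _ ≤ H.act (H.inner x x) x := act_mono_l x hsupp

/-- In a `Q`-sheaf, any downwards closed set of Hilbert sections
whose join is the top is a Hilbert basis. -/
theorem stmt3 {Q X : Type*} [Order.Frame Q] [Order.Frame X]
    (Qf : InverseQuantalFrame Q) (H : QSheaf Qf X)
    (S : Set X)
    (hsec : ∀ s ∈ S, H.IsHilbertSection s)
    (hdc : ∀ x s, s ∈ S → x ≤ s → x ∈ S)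
    (hcov : sSup S = ⊤) :
    H.IsHilbertBasis S := by
  intro x
  have act_mono_l : ∀ {a b : Q} (y : X), a ≤ b → H.act a y ≤ H.act b y :=
    fun {a b} y h => mono_of_sSup (fun c => H.act c y) (fun S => H.sSup_act S y) h
  have inner_mono_l : ∀ {y z : X} (w : X), y ≤ z → H.inner y w ≤ H.inner z w :=
    fun {y z} w h => mono_of_sSup (fun v => H.inner v w) (fun S => H.sSup_inner S w) h
  apply le_antisymm
  · have h1 : x = ⨆ s ∈ S, x ⊓ s := by
      conv_lhs => rw [← inf_top_eq x, ← hcov, inf_sSup_eq]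
    conv_lhs => rw [h1]
    apply iSup₂_le
    intro s hs
    have hmem : x ⊓ s ∈ S := hdc _ s hs inf_le_right
    have h2 : x ⊓ s ≤ H.act (H.inner x (x ⊓ s)) (x ⊓ s) :=
      le_trans (le_act_inner_self H (x ⊓ s))
        (act_mono_l (x ⊓ s) (inner_mono_l (x ⊓ s) inf_le_left))
    exact le_trans h2 (le_iSup₂ (f := fun t _ => H.act (H.inner x t) t) _ hmem)
  · exact iSup₂_le fun t ht => hsec t ht x
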